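/- Let J̃ be a compact interval and η : J̃ → ℂ a C² injective map such that C_η ≤ |η(x)−η(y)|/|x−y| for all x ≠ y in J̃, for some C_η > 0. Define Λ : J̃² → ℝ by Λ(x,y) = ln| (η(x)−η(y))/(x−y) | for x ≠ y and Λ(x,x) = ln|η′(x)|. Then Λ is Lipschitz continuous on J̃² (with the Euclidean metric) with Lipschitz constant at most √2 · C_η^{−1} · sup_{x∈J̃} |η′′(x)|. -/

import Mathlib

open Set

noncomputable section

/-- the function `Λ(x,y) = ln|(η(x)-η(y))/(x-y)|` (with `Λ(x,x) = ln|η'(x)|`)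
is Lipschitz on `J̃²` (Euclidean metric) with constant at most `√2 · C_η⁻¹ · sup |η''|`. -/
theorem log_difference_quotient_lipschitz (a b : ℝ) (hab : a < b) (η : ℝ → ℂ) (Cη : ℝ)
    (hC0 : 0 < Cη)
    (hreg : ContDiffOn ℝ 2 η (Icc a b))
    (hlow : ∀ x ∈ Icc a b, ∀ y ∈ Icc a b, Cη * |x - y| ≤ ‖η x - η y‖)
    (Λ : ℝ → ℝ → ℝ) (M : ℝ)
    (hΛoff : ∀ x ∈ Icc a b, ∀ y ∈ Icc a b, x ≠ y →
      Λ x y = Real.log ‖(η x - η y) / ((x : ℂ) - (y : ℂ))‖)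
    (hΛdiag : ∀ x ∈ Icc a b, Λ x x = Real.log ‖derivWithin η (Icc a b) x‖)
    (hM : M = sSup ((fun x => ‖iteratedDerivWithin 2 η (Icc a b) x‖) '' Icc a b)) :
    ∀ x ∈ Icc a b, ∀ y ∈ Icc a b, ∀ x' ∈ Icc a b, ∀ y' ∈ Icc a b,
      |Λ x y - Λ x' y'|
        ≤ Real.sqrt 2 * Cη⁻¹ * M * Real.sqrt ((x - x') ^ 2 + (y - y') ^ 2) := by
  intro x hx y hy x' hx' y' hy'
  set s : Set ℝ := Icc a b with hsdef
  have hs : UniqueDiffOn ℝ s := uniqueDiffOn_Icc hab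
  have hconv : Convex ℝ s := convex_Icc a b
  set f : ℝ → ℂ := derivWithin η s with hfdef
  set g : ℝ → ℂ := iteratedDerivWithin 2 η s with hgdef
  have hf1 : ContDiffOn ℝ 1 f s := hreg.derivWithin hs (by norm_num)
  have hfd : ∀ z ∈ s, HasDerivWithinAt η (f z) s z := fun z hz =>
    ((hreg.differentiableOn (by norm_num)) z hz).hasDerivWithinAt
  have hgd : ∀ z ∈ s, HasDerivWithinAt f (g z) s z := by
    intro z hz
    have h1 : g z = derivWithin f s z := by
      rw [hgdef, show (2:ℕ) = 1 + 1 from rfl, iteratedDerivWithin_succ]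
      exact derivWithin_congr (fun w hw => congrFun iteratedDerivWithin_one w)
        (congrFun iteratedDerivWithin_one z)
    rw [h1]
    exact ((hf1.differentiableOn one_ne_zero) z hz).hasDerivWithinAt
  -- bound on the second derivative
  have hMbound : ∀ z ∈ s, ‖g z‖ ≤ M := by
    have hcont : ContinuousOn g s := hreg.continuousOn_iteratedDerivWithin le_rfl hs
    have hbdd : BddAbove ((fun z => ‖g z‖) '' s) :=
      ((isCompact_Icc).image_of_continuousOn
        (continuous_norm.comp_continuousOn hcont)).bddAbove
    intro z hz
    rw [hM]
    exact le_csSup hbdd ⟨z, hz, rfl⟩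
  have ha : a ∈ s := left_mem_Icc.mpr hab.le
  have hM0 : 0 ≤ M := le_trans (norm_nonneg _) (hMbound a ha)
  -- f is M-Lipschitz on s
  have hfLip : ∀ u ∈ s, ∀ v ∈ s, ‖f u - f v‖ ≤ M * |u - v| := by
    intro u hu v hv
    have := hconv.norm_image_sub_le_of_norm_hasDerivWithin_le hgd
      (fun z hz => by simpa using hMbound z hz) hv hu
    simpa [Real.norm_eq_abs] using this
  -- the divided difference function
  set Q : ℝ → ℝ → ℂ := fun u v => if u = v then f u else (η u - η v) / ((u:ℂ) - v) with hQdef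
  have hQsymm : ∀ u v : ℝ, Q u v = Q v u := by
    intro u v
    rcases eq_or_ne u v with rfl | h
    · rfl
    · have h1 : (u:ℂ) - v ≠ 0 := sub_ne_zero.mpr (by exact_mod_cast h)
      have h2 : (v:ℂ) - u ≠ 0 := sub_ne_zero.mpr (by exact_mod_cast h.symm)
      simp only [hQdef, if_neg h, if_neg h.symm]
      field_simp
      ring
  -- Taylor-type estimate
  have hTay : ∀ p ∈ s, ∀ w ∈ s, ‖Q w p - f p‖ ≤ M * |w - p| := by
    intro p hp w hw
    rcases eq_or_ne w p with rfl | hwp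
    · simp [hQdef]
    · have hwpC : (w:ℂ) - p ≠ 0 := sub_ne_zero.mpr (by exact_mod_cast hwp)
      set φ : ℝ → ℂ := fun t => η t - (f p) * t with hφdef
      have hIs : Icc (min p w) (max p w) ⊆ s :=
        Icc_subset_Icc (le_min hp.1 hw.1) (max_le hp.2 hw.2)
      have hpI : p ∈ Icc (min p w) (max p w) := ⟨min_le_left _ _, le_max_left _ _⟩
      have hwI : w ∈ Icc (min p w) (max p w) := ⟨min_le_right _ _, le_max_right _ _⟩
      have hφd : ∀ t ∈ Icc (min p w) (max p w),
          HasDerivWithinAt φ (f t - f p) (Icc (min p w) (max p w)) t := by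
        intro t ht
        have h1 : HasDerivWithinAt η (f t) (Icc (min p w) (max p w)) t :=
          (hfd t (hIs ht)).mono hIs
        have h2 : HasDerivWithinAt (fun t : ℝ => (f p) * (t:ℂ)) (f p)
            (Icc (min p w) (max p w)) t := by
          have := (Complex.ofRealCLM.hasDerivAt (x := t)).hasDerivWithinAt
            (s := Icc (min p w) (max p w))
          simpa using this.const_mul (f p)
        exact h1.sub h2
      have hbd : ∀ t ∈ Icc (min p w) (max p w), ‖f t - f p‖ ≤ M * |w - p| := by
        intro t ht
        have h1 : ‖f t - f p‖ ≤ M * |t - p| := hfLip t (hIs ht) p hp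
        have hm1 : min p w ≤ t := ht.1
        have hm2 : t ≤ max p w := ht.2
        have h2 : |t - p| ≤ |w - p| := by
          rcases le_total p w with h | h
          · rw [min_eq_left h] at hm1
            rw [max_eq_right h] at hm2
            rcases abs_cases (t - p) with ⟨e1, _⟩ | ⟨e1, _⟩ <;>
              rcases abs_cases (w - p) with ⟨e2, _⟩ | ⟨e2, _⟩ <;> linarith
          · rw [min_eq_right h] at hm1
            rw [max_eq_left h] at hm2
            rcases abs_cases (t - p) with ⟨e1, _⟩ | ⟨e1, _⟩ <;>
              rcases abs_cases (w - p) with ⟨e2, _⟩ | ⟨e2, _⟩ <;> linarith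
        calc ‖f t - f p‖ = ‖f t - f p‖ := rfl
          _ ≤ M * |t - p| := h1
          _ ≤ M * |w - p| := by nlinarith [abs_nonneg (t - p)]
      have hmv := (convex_Icc _ _).norm_image_sub_le_of_norm_hasDerivWithin_le hφd hbd hpI hwI
      have hφeq : Q w p - f p = (φ w - φ p) / ((w:ℂ) - p) := by
        simp only [hQdef, if_neg hwp, hφdef]
        field_simp
        ring
      rw [hφeq, norm_div]
      have hcast : ‖(w:ℂ) - p‖ = |w - p| := by
        rw [show (w:ℂ) - p = ((w - p : ℝ) : ℂ) by push_cast; ring, Complex.norm_real, Real.norm_eq_abs]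
      rw [hcast]
      rw [div_le_iff₀ (abs_pos.mpr (sub_ne_zero.mpr hwp))]
      calc ‖φ w - φ p‖ = ‖φ w - φ p‖ := rfl
        _ ≤ M * |w - p| * ‖w - p‖ := hmv
        _ = M * |w - p| * |w - p| := by rw [Real.norm_eq_abs]
  -- key: one-variable Lipschitz estimate for Q
  have habs3 : ∀ u v y : ℝ, (y - u) * (y - v) ≤ 0 → |u - y| + |v - y| = |u - v| := by
    intro u v y h
    rcases mul_nonpos_iff.mp h with ⟨h1, h2⟩ | ⟨h1, h2⟩ <;>
      rcases abs_cases (u - y) with ⟨e1, _⟩ | ⟨e1, _⟩ <;>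
      rcases abs_cases (v - y) with ⟨e2, _⟩ | ⟨e2, _⟩ <;>
      rcases abs_cases (u - v) with ⟨e3, _⟩ | ⟨e3, _⟩ <;>
      linarith
  have hiden : ∀ u v y : ℝ, u ≠ v → u ≠ y → v ≠ y →
      Q u y - Q v y = (Q u v - Q y v) * ((u:ℂ) - v) / ((u:ℂ) - y) := by
    intro u v y huv huy hvy
    have h1 : (u:ℂ) - v ≠ 0 := sub_ne_zero.mpr (by exact_mod_cast huv)
    have h2 : (u:ℂ) - y ≠ 0 := sub_ne_zero.mpr (by exact_mod_cast huy)
    have h3 : (v:ℂ) - y ≠ 0 := sub_ne_zero.mpr (by exact_mod_cast hvy)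
    have h4 : (y:ℂ) - v ≠ 0 := by
      rw [show (y:ℂ) - v = -((v:ℂ) - y) by ring]; exact neg_ne_zero.mpr h3
    simp only [hQdef, if_neg huv, if_neg huy, if_neg hvy, if_neg (Ne.symm hvy)]
    field_simp
    ring
  -- helper : case where v is (weakly) between u and y, all distinct
  have hmid : ∀ u ∈ s, ∀ v ∈ s, ∀ y ∈ s, u ≠ v → u ≠ y → v ≠ y → (v - u) * (v - y) ≤ 0 →
      ‖Q u y - Q v y‖ ≤ M * |u - v| := by
    intro u hu v hv y hy huv huy hvy hmidv
    have huyne : |u - y| ≠ 0 := abs_ne_zero.mpr (sub_ne_zero.mpr huy)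
    have huypos : 0 < |u - y| := abs_pos.mpr (sub_ne_zero.mpr huy)
    have hsum : |u - v| + |y - v| = |u - y| := habs3 u y v hmidv
    have h1 : ‖Q u v - f v‖ ≤ M * |u - v| := hTay v hv u hu
    have h2 : ‖Q y v - f v‖ ≤ M * |y - v| := hTay v hv y hy
    have h3 : ‖Q u v - Q y v‖ ≤ M * |u - y| := by
      calc ‖Q u v - Q y v‖
          = ‖(Q u v - f v) - (Q y v - f v)‖ := by
            rw [show Q u v - Q y v = (Q u v - f v) - (Q y v - f v) by ring]
        _ ≤ ‖Q u v - f v‖ + ‖Q y v - f v‖ :=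
            norm_sub_le _ _
        _ ≤ M * |u - v| + M * |y - v| := add_le_add h1 h2
        _ = M * |u - y| := by rw [← hsum]; ring
    rw [hiden u v y huv huy hvy, norm_div, norm_mul]
    have hc1 : ‖(u:ℂ) - v‖ = |u - v| := by
      rw [show (u:ℂ) - v = ((u - v : ℝ) : ℂ) by push_cast; ring, Complex.norm_real, Real.norm_eq_abs]
    have hc2 : ‖(u:ℂ) - y‖ = |u - y| := by
      rw [show (u:ℂ) - y = ((u - y : ℝ) : ℂ) by push_cast; ring, Complex.norm_real, Real.norm_eq_abs]
    rw [hc1, hc2, div_le_iff₀ huypos]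
    calc ‖Q u v - Q y v‖ * |u - v| ≤ (M * |u - y|) * |u - v| := by
          nlinarith [abs_nonneg (u - v)]
      _ = M * |u - v| * |u - y| := by ring
  have hQLip1 : ∀ y ∈ s, ∀ u ∈ s, ∀ v ∈ s, ‖Q u y - Q v y‖ ≤ M * |u - v| := by
    intro y hy u hu v hv
    rcases eq_or_ne u v with rfl | huv
    · simp
    rcases eq_or_ne u y with rfl | huy
    · calc ‖Q u u - Q v u‖ = ‖Q v u - f u‖ := by
            rw [show Q u u = f u from if_pos rfl, norm_sub_rev]
        _ ≤ M * |v - u| := hTay u hu v hv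
        _ = M * |u - v| := by rw [abs_sub_comm]
    rcases eq_or_ne v y with rfl | hvy
    · calc ‖Q u v - Q v v‖ = ‖Q u v - f v‖ := by
            rw [show Q v v = f v from if_pos rfl]
        _ ≤ M * |u - v| := hTay v hv u hu
    by_cases hyM : (y - u) * (y - v) ≤ 0
    · have h1 := hTay y hy u hu
      have h2 := hTay y hy v hv
      have hsum := habs3 u v y hyM
      calc ‖Q u y - Q v y‖
          = ‖(Q u y - f y) - (Q v y - f y)‖ := by
            rw [show Q u y - Q v y = (Q u y - f y) - (Q v y - f y) by ring]
        _ ≤ ‖Q u y - f y‖ + ‖Q v y - f y‖ :=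
            norm_sub_le _ _
        _ ≤ M * |u - y| + M * |v - y| := add_le_add h1 h2
        _ = M * |u - v| := by rw [← hsum]; ring
    by_cases hvM : (v - u) * (v - y) ≤ 0
    · exact hmid u hu v hv y hy huv huy hvy hvM
    · have huM : (u - v) * (u - y) ≤ 0 := by
        push_neg at hyM hvM
        nlinarith
      have := hmid v hv u hu y hy (Ne.symm huv) hvy huy huM
      calc ‖Q u y - Q v y‖ = ‖Q v y - Q u y‖ := by
            rw [norm_sub_rev]
        _ ≤ M * |v - u| := this
        _ = M * |u - v| := by rw [abs_sub_comm]
  -- lower bound on |Q|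
  have hQlowoff : ∀ u ∈ s, ∀ v ∈ s, u ≠ v → Cη ≤ ‖Q u v‖ := by
    intro u hu v hv h
    have huv : 0 < |u - v| := abs_pos.mpr (sub_ne_zero.mpr h)
    have hc1 : ‖(u:ℂ) - v‖ = |u - v| := by
      rw [show (u:ℂ) - v = ((u - v : ℝ) : ℂ) by push_cast; ring, Complex.norm_real, Real.norm_eq_abs]
    rw [show Q u v = (η u - η v) / ((u:ℂ) - v) from if_neg h, norm_div, hc1,
      le_div_iff₀ huv]
    exact hlow u hu v hv
  have hQlow : ∀ u ∈ s, ∀ v ∈ s, Cη ≤ ‖Q u v‖ := by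
    intro u hu v hv
    rcases eq_or_ne u v with rfl | h
    · rw [show Q u u = f u from if_pos rfl]
      refine le_of_forall_pos_le_add ?_
      intro ε hε
      set δ : ℝ := min ((b - a)/2) (ε/(M+1)) with hδdef
      have hδ0 : 0 < δ := lt_min (by linarith) (by positivity)
      have hδ1 : δ ≤ (b - a)/2 := min_le_left _ _
      have hδ2 : M * δ ≤ ε := by
        have h1 : δ ≤ ε/(M+1) := min_le_right _ _
        have h2 : M * δ ≤ M * (ε/(M+1)) := by nlinarith
        have h3 : M * (ε/(M+1)) ≤ ε := by
          rw [mul_div_assoc']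
          rw [div_le_iff₀ (by linarith)]
          nlinarith
        linarith
      obtain ⟨w, hw, hwu, hwd⟩ : ∃ w, w ∈ s ∧ w ≠ u ∧ |w - u| ≤ δ := by
        by_cases hmid2 : (a + b)/2 ≤ u
        · refine ⟨u - δ, ⟨by linarith [hu.1], by linarith [hu.2]⟩, ?_, ?_⟩
          · intro hc
            exact hδ0.ne' (sub_eq_self.mp hc)
          · rw [show u - δ - u = -δ by ring, abs_neg, abs_of_pos hδ0]
        · push_neg at hmid2
          refine ⟨u + δ, ⟨by linarith [hu.1], by linarith [hu.2]⟩, ?_, ?_⟩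
          · intro hc
            have h5 : δ = 0 := by linarith
            exact hδ0.ne' h5
          · rw [show u + δ - u = δ by ring, abs_of_pos hδ0]
      have h1 : Cη ≤ ‖Q w u‖ := hQlowoff w hw u hu hwu
      have h2 : ‖Q w u - f u‖ ≤ M * |w - u| := hTay u hu w hw
      have h3 : ‖Q w u‖ ≤ ‖f u‖ + ‖Q w u - f u‖ := by
        simpa using norm_add_le (f u) (Q w u - f u)
      have h4 : M * |w - u| ≤ ε := le_trans (mul_le_mul_of_nonneg_left hwd hM0) hδ2
      linarith
    · exact hQlowoff u hu v hv h
  -- Λ in terms of Q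
  have hΛQ : ∀ u ∈ s, ∀ v ∈ s, Λ u v = Real.log (‖Q u v‖) := by
    intro u hu v hv
    rcases eq_or_ne u v with rfl | h
    · rw [hΛdiag u hu, show Q u u = f u from if_pos rfl]
    · rw [hΛoff u hu v hv h, show Q u v = (η u - η v) / ((u:ℂ) - v) from if_neg h]
  -- log Lipschitz lemma
  have hloglem : ∀ r t : ℝ, Cη ≤ r → Cη ≤ t →
      |Real.log r - Real.log t| ≤ Cη⁻¹ * |r - t| := by
    have key : ∀ r t : ℝ, Cη ≤ r → Cη ≤ t → t ≤ r →
        Real.log r - Real.log t ≤ Cη⁻¹ * (r - t) := by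
      intro r t hr ht hrt
      have ht0 : 0 < t := lt_of_lt_of_le hC0 ht
      have hr0 : 0 < r := lt_of_lt_of_le hC0 hr
      rw [← Real.log_div hr0.ne' ht0.ne']
      have h1 : Real.log (r/t) ≤ r/t - 1 := Real.log_le_sub_one_of_pos (by positivity)
      have h2 : r/t - 1 = (r - t)/t := by field_simp
      have h3 : (r-t)/t ≤ (r-t)/Cη := div_le_div_of_nonneg_left (sub_nonneg.mpr hrt) hC0 ht
      have h4 : (r-t)/Cη = Cη⁻¹*(r-t) := div_eq_inv_mul _ _
      linarith
    intro r t hr ht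
    rcases le_total t r with h | h
    · have ht0 : 0 < t := lt_of_lt_of_le hC0 ht
      rw [abs_of_nonneg (sub_nonneg.mpr (Real.log_le_log ht0 h)),
        abs_of_nonneg (sub_nonneg.mpr h)]
      exact key r t hr ht h
    · have hr0 : 0 < r := lt_of_lt_of_le hC0 hr
      rw [abs_sub_comm, abs_sub_comm r t,
        abs_of_nonneg (sub_nonneg.mpr (Real.log_le_log hr0 h)),
        abs_of_nonneg (sub_nonneg.mpr h)]
      exact key t r ht hr h
  -- one-variable Lipschitz for Λ
  have hΛLip : ∀ u ∈ s, ∀ v ∈ s, ∀ u' ∈ s, ∀ v' ∈ s,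
      ‖Q u v - Q u' v'‖ ≤ M * (|u - u'| + |v - v'|) →
      |Λ u v - Λ u' v'| ≤ Cη⁻¹ * (M * (|u - u'| + |v - v'|)) := by
    intro u hu v hv u' hu' v' hv' hQd
    rw [hΛQ u hu v hv, hΛQ u' hu' v' hv']
    have h1 := hloglem (‖Q u v‖) (‖Q u' v'‖)
      (hQlow u hu v hv) (hQlow u' hu' v' hv')
    have h2 : |‖Q u v‖ - ‖Q u' v'‖| ≤ ‖Q u v - Q u' v'‖ :=
      abs_norm_sub_norm_le _ _
    have hCinv : 0 ≤ Cη⁻¹ := by positivity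
    calc |Real.log (‖Q u v‖) - Real.log (‖Q u' v'‖)|
        ≤ Cη⁻¹ * |‖Q u v‖ - ‖Q u' v'‖| := h1
      _ ≤ Cη⁻¹ * ‖Q u v - Q u' v'‖ := by nlinarith
      _ ≤ Cη⁻¹ * (M * (|u - u'| + |v - v'|)) := by nlinarith
  -- the two one-variable steps
  have step1 : |Λ x y - Λ x' y| ≤ Cη⁻¹ * (M * |x - x'|) := by
    have := hΛLip x hx y hy x' hx' y hy (by
      simpa using hQLip1 y hy x hx x' hx')
    simpa using this
  have step2 : |Λ x' y - Λ x' y'| ≤ Cη⁻¹ * (M * |y - y'|) := by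
    have hQ2 : ‖Q x' y - Q x' y'‖ ≤ M * |y - y'| := by
      rw [hQsymm x' y, hQsymm x' y']
      exact hQLip1 x' hx' y hy y' hy'
    have := hΛLip x' hx' y hy x' hx' y' hy' (by simpa using hQ2)
    simpa using this
  -- conclusion
  have hsq : |x - x'| + |y - y'| ≤ Real.sqrt 2 * Real.sqrt ((x - x')^2 + (y - y')^2) := by
    rw [← Real.sqrt_mul (by norm_num)]
    have h : (|x - x'| + |y - y'|)^2 ≤ 2*((x - x')^2 + (y - y')^2) := by
      nlinarith [sq_nonneg (|x - x'| - |y - y'|), sq_abs (x - x'), sq_abs (y - y')]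
    exact (Real.le_sqrt (by positivity) (by positivity)).mpr h
  have hCinv : 0 ≤ Cη⁻¹ := by positivity
  calc |Λ x y - Λ x' y'| ≤ |Λ x y - Λ x' y| + |Λ x' y - Λ x' y'| := abs_sub_le _ _ _
    _ ≤ Cη⁻¹ * (M * |x - x'|) + Cη⁻¹ * (M * |y - y'|) := add_le_add step1 step2
    _ = Cη⁻¹ * M * (|x - x'| + |y - y'|) := by ring
    _ ≤ Cη⁻¹ * M * (Real.sqrt 2 * Real.sqrt ((x - x')^2 + (y - y')^2)) := by
        have hm : 0 ≤ Cη⁻¹ * M := by positivity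
        nlinarith [hsq]
    _ = Real.sqrt 2 * Cη⁻¹ * M * Real.sqrt ((x - x')^2 + (y - y')^2) := by ring
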